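/- arXiv:1607.05394 — 5 statements merged into one kernel-verified Lean document; each statement's English description precedes it below -/
import Mathlib

section
/- Let f = x^3 + p x^2 + q x + r be a separable monic cubic polynomial over a field K, with roots α, β, γ in a splitting field, and let δ = (β−α)(α−γ)(γ−β). If (2p^2 − 6q)α + (pq − 9r + δ) ≠ 0 then β = (−(pq − 9r − δ)α + (6pr − 2q^2)) / ((2p^2 − 6q)α + (pq − 9r + δ)). -/
/-- Lemma on roots of a separable monic cubic: β as a Möbius transformation of α.
K is a field, the roots α, β, γ live in a splitting field L of f over K. -/
theorem cubic_root_beta_moebius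
    (K L : Type*) [Field K] [Field L] [Algebra K L]
    (p q r : K) (α β γ : L)
    (hf : ∀ x : L, x ^ 3 + algebraMap K L p * x ^ 2 + algebraMap K L q * x
        + algebraMap K L r = (x - α) * (x - β) * (x - γ))
    (hαβ : α ≠ β) (hβγ : β ≠ γ) (hαγ : α ≠ γ)
    (δ : L) (hδ : δ = (β - α) * (α - γ) * (γ - β))
    (P Q R : L) (hP : P = algebraMap K L p) (hQ : Q = algebraMap K L q)
    (hR : R = algebraMap K L r)
    (hden : (2 * P ^ 2 - 6 * Q) * α + (P * Q - 9 * R + δ) ≠ 0) :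
    β = (-(P * Q - 9 * R - δ) * α + (6 * P * R - 2 * Q ^ 2))
        / ((2 * P ^ 2 - 6 * Q) * α + (P * Q - 9 * R + δ)) := by
  have hg : ∀ x : L, P * x ^ 2 + Q * x + R
      - (-(α + β + γ) * x ^ 2 + (α * β + β * γ + γ * α) * x - α * β * γ) = 0 := by
    intro x
    have := hf x
    rw [← hP, ← hQ, ← hR] at this
    linear_combination this
  have hA : ∀ x y : L, x ≠ y →
      (P + (α + β + γ)) * (x + y) + (Q - (α * β + β * γ + γ * α)) = 0 := by
    intro x y hxy
    have h3 : (x - y) * ((P + (α + β + γ)) * (x + y) + (Q - (α * β + β * γ + γ * α))) = 0 := by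
      linear_combination hg x - hg y
    rcases mul_eq_zero.mp h3 with h | h
    · exact absurd (sub_eq_zero.mp h) hxy
    · exact h
  have hP' : P = -(α + β + γ) := by
    have h3 : (P + (α + β + γ)) * (α - γ) = 0 := by
      linear_combination hA α β hαβ - hA β γ hβγ
    rcases mul_eq_zero.mp h3 with h | h
    · linear_combination h
    · exact absurd (sub_eq_zero.mp h) hαγ
  have hQ' : Q = α * β + β * γ + γ * α := by
    linear_combination hA α β hαβ - (α + β) * hP'
  have hR' : R = -(α * β * γ) := by
    linear_combination hg 0
  rw [eq_div_iff hden]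
  rw [hP', hQ', hR', hδ]
  ring
end

section
/- Let f = x^3 + p x^2 + q x + r be a separable monic cubic polynomial over a field K with roots α, β, γ and δ = (β−α)(α−γ)(γ−β). If (2p^2 − 6q)α + (pq − 9r − δ) ≠ 0 then γ = (−(pq − 9r + δ)α + (6pr − 2q^2)) / ((2p^2 − 6q)α + (pq − 9r − δ)). -/
/-- Lemma on roots of a separable monic cubic: γ as a Möbius transformation of α.
K is a field, the roots α, β, γ live in a splitting field L of f over K. -/
theorem cubic_root_gamma_moebius
    (K L : Type*) [Field K] [Field L] [Algebra K L]
    (p q r : K) (α β γ : L)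
    (hf : ∀ x : L, x ^ 3 + algebraMap K L p * x ^ 2 + algebraMap K L q * x
        + algebraMap K L r = (x - α) * (x - β) * (x - γ))
    (hαβ : α ≠ β) (hβγ : β ≠ γ) (hαγ : α ≠ γ)
    (δ : L) (hδ : δ = (β - α) * (α - γ) * (γ - β))
    (P Q R : L) (hP : P = algebraMap K L p) (hQ : Q = algebraMap K L q)
    (hR : R = algebraMap K L r)
    (hden : (2 * P ^ 2 - 6 * Q) * α + (P * Q - 9 * R - δ) ≠ 0) :
    γ = (-(P * Q - 9 * R + δ) * α + (6 * P * R - 2 * Q ^ 2))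
        / ((2 * P ^ 2 - 6 * Q) * α + (P * Q - 9 * R - δ)) := by
  simp only [← hP, ← hQ, ← hR] at hf
  have k1 : α ^ 2 + α * β + β ^ 2 + P * (α + β) + Q = 0 := by
    apply mul_left_cancel₀ (sub_ne_zero.mpr hαβ)
    linear_combination hf α - hf β
  have k2 : β ^ 2 + β * γ + γ ^ 2 + P * (β + γ) + Q = 0 := by
    apply mul_left_cancel₀ (sub_ne_zero.mpr hβγ)
    linear_combination hf β - hf γ
  have hP2 : P = -(α + β + γ) := by
    apply mul_left_cancel₀ (sub_ne_zero.mpr hαγ)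
    linear_combination k1 - k2
  have hQ2 : Q = α * β + β * γ + γ * α := by
    linear_combination k1 - (α + β) * hP2
  have hR2 : R = -(α * β * γ) := by
    linear_combination hf α - α ^ 2 * hP2 - α * hQ2
  rw [eq_div_iff hden, hδ, hP2, hQ2, hR2]
  ring
end

section
/- For any field K of characteristic not 2 or 3 and element d ∈ K with d(d−1)(d^2−d+1) ≠ 0, if ξ0, ξ1, ξ2 are the three roots of 4x^3 + (d^4 − 6d^3 + 3d^2 + 2d + 1)x^2 + 2d^2(d−1)(d^2−d−1)x + d^4(d−1)^2 in an algebraic closure, and t = (4/(d^4(d−1)^4)) (ξ1 − ξ0)(ξ0 − ξ2)(ξ2 − ξ1), then t^2 = (d^3 − 8d^2 + 5d + 1)/(d(d−1)). -/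
/-- Identity t² = (d³ − 8d² + 5d + 1)/(d(d−1)) for the product of differences of
the roots of the 2-division polynomial over a field of characteristic ≠ 2, 3. -/
theorem two_division_poly_discriminant_identity
    (L : Type*) [Field L] (h2 : (2 : L) ≠ 0) (h3 : (3 : L) ≠ 0)
    (d : L) (hd : d * (d - 1) * (d ^ 2 - d + 1) ≠ 0)
    (ξ0 ξ1 ξ2 : L)
    (hroots : ∀ x : L,
      4 * x ^ 3 + (d ^ 4 - 6 * d ^ 3 + 3 * d ^ 2 + 2 * d + 1) * x ^ 2
        + 2 * d ^ 2 * (d - 1) * (d ^ 2 - d - 1) * x + d ^ 4 * (d - 1) ^ 2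
      = 4 * (x - ξ0) * (x - ξ1) * (x - ξ2))
    (t : L)
    (ht : t = 4 / (d ^ 4 * (d - 1) ^ 4) * ((ξ1 - ξ0) * (ξ0 - ξ2) * (ξ2 - ξ1))) :
    t ^ 2 = (d ^ 3 - 8 * d ^ 2 + 5 * d + 1) / (d * (d - 1)) := by
  have hdne : d ≠ 0 := fun h => hd (by simp [h])
  have hd1 : d - 1 ≠ 0 := fun h => hd (by simp [h])
  have h4 : (4 : L) ≠ 0 := by
    have := mul_ne_zero h2 h2; norm_num at this; exact this
  have h8 : (8 : L) ≠ 0 := by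
    have := mul_ne_zero h4 h2; norm_num at this; exact this
  have h64 : (64 : L) ≠ 0 := by
    have := mul_ne_zero h8 h8; norm_num at this; exact this
  have h0 := hroots 0
  have h1 := hroots 1
  have hm1 := hroots (-1)
  have e1h : 4 * (ξ0 + ξ1 + ξ2) = -(d ^ 4 - 6 * d ^ 3 + 3 * d ^ 2 + 2 * d + 1) := by
    apply mul_left_cancel₀ h8
    linear_combination 4 * h1 + 4 * hm1 - 8 * h0
  have e2h : 2 * (ξ0 * ξ1 + ξ0 * ξ2 + ξ1 * ξ2) = d ^ 2 * (d - 1) * (d ^ 2 - d - 1) := by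
    apply mul_left_cancel₀ h4
    linear_combination -(h1 - hm1)
  have e3h : 4 * (ξ0 * ξ1 * ξ2) = -(d ^ 4 * (d - 1) ^ 2) := by
    linear_combination h0
  have key : 64 * ((ξ1 - ξ0) * (ξ0 - ξ2) * (ξ2 - ξ1)) ^ 2
      = (-(d ^ 4 - 6 * d ^ 3 + 3 * d ^ 2 + 2 * d + 1)) ^ 2
          * (d ^ 2 * (d - 1) * (d ^ 2 - d - 1)) ^ 2
        - 32 * (d ^ 2 * (d - 1) * (d ^ 2 - d - 1)) ^ 3
        - (-(d ^ 4 - 6 * d ^ 3 + 3 * d ^ 2 + 2 * d + 1)) ^ 3 * (-(d ^ 4 * (d - 1) ^ 2))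
        + 36 * (-(d ^ 4 - 6 * d ^ 3 + 3 * d ^ 2 + 2 * d + 1))
            * (d ^ 2 * (d - 1) * (d ^ 2 - d - 1)) * (-(d ^ 4 * (d - 1) ^ 2))
        - 108 * (-(d ^ 4 * (d - 1) ^ 2)) ^ 2 := by
    linear_combination
      ((4 * (ξ0 + ξ1 + ξ2) + -(d ^ 4 - 6 * d ^ 3 + 3 * d ^ 2 + 2 * d + 1))
          * (2 * (ξ0 * ξ1 + ξ0 * ξ2 + ξ1 * ξ2)) ^ 2
        - ((4 * (ξ0 + ξ1 + ξ2)) ^ 2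
            + (4 * (ξ0 + ξ1 + ξ2)) * (-(d ^ 4 - 6 * d ^ 3 + 3 * d ^ 2 + 2 * d + 1))
            + (-(d ^ 4 - 6 * d ^ 3 + 3 * d ^ 2 + 2 * d + 1)) ^ 2) * (4 * (ξ0 * ξ1 * ξ2))
        + 36 * (2 * (ξ0 * ξ1 + ξ0 * ξ2 + ξ1 * ξ2)) * (4 * (ξ0 * ξ1 * ξ2))) * e1h
      + ((-(d ^ 4 - 6 * d ^ 3 + 3 * d ^ 2 + 2 * d + 1)) ^ 2
            * (2 * (ξ0 * ξ1 + ξ0 * ξ2 + ξ1 * ξ2) + d ^ 2 * (d - 1) * (d ^ 2 - d - 1))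
        - 32 * ((2 * (ξ0 * ξ1 + ξ0 * ξ2 + ξ1 * ξ2)) ^ 2
            + (2 * (ξ0 * ξ1 + ξ0 * ξ2 + ξ1 * ξ2)) * (d ^ 2 * (d - 1) * (d ^ 2 - d - 1))
            + (d ^ 2 * (d - 1) * (d ^ 2 - d - 1)) ^ 2)
        + 36 * (-(d ^ 4 - 6 * d ^ 3 + 3 * d ^ 2 + 2 * d + 1)) * (4 * (ξ0 * ξ1 * ξ2))) * e2h
      + (-(-(d ^ 4 - 6 * d ^ 3 + 3 * d ^ 2 + 2 * d + 1)) ^ 3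
        + 36 * (-(d ^ 4 - 6 * d ^ 3 + 3 * d ^ 2 + 2 * d + 1))
            * (d ^ 2 * (d - 1) * (d ^ 2 - d - 1))
        - 108 * (4 * (ξ0 * ξ1 * ξ2) + -(d ^ 4 * (d - 1) ^ 2))) * e3h
  have hnum2 : (d ^ 4 * (d - 1) ^ 4) ^ 2 ≠ 0 :=
    pow_ne_zero _ (mul_ne_zero (pow_ne_zero _ hdne) (pow_ne_zero _ hd1))
  have hden : d * (d - 1) ≠ 0 := mul_ne_zero hdne hd1
  rw [ht, mul_pow, div_pow, div_mul_eq_mul_div, div_eq_div_iff hnum2 hden]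
  apply mul_left_cancel₀ h64
  linear_combination (16 * (d * (d - 1))) * key
end

section
/- Over ℚ(t), if δ0, δ1, δ2 are the roots of δ^3 − (t^2+8)δ^2 + (t^2+5)δ + 1 = 0 in a splitting field, then δ1 = (δ0 − 1)/δ0 and δ2 = 1/(1 − δ0) after suitable ordering; equivalently, the polynomial δ^3 − (t^2+8)δ^2 + (t^2+5)δ + 1 has the property that if δ is a root then (δ−1)/δ is also a root. -/
/-- Over ℚ(t), the map δ ↦ (δ−1)/δ permutes the roots of
δ³ − (t²+8)δ² + (t²+5)δ + 1: if δ is a root (in any field extension of ℚ(t))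
then so is (δ−1)/δ. -/
theorem diamond_permutes_roots_of_delta_cubic
    (L : Type*) [Field L] [Algebra (RatFunc ℚ) L] (δ : L)
    (t : L) (ht : t = algebraMap (RatFunc ℚ) L RatFunc.X)
    (hroot : δ ^ 3 - (t ^ 2 + 8) * δ ^ 2 + (t ^ 2 + 5) * δ + 1 = 0) :
    ((δ - 1) / δ) ^ 3 - (t ^ 2 + 8) * ((δ - 1) / δ) ^ 2
      + (t ^ 2 + 5) * ((δ - 1) / δ) + 1 = 0 := by
  have hδ : δ ≠ 0 := by
    intro h
    rw [h] at hroot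
    norm_num at hroot
  field_simp
  linear_combination (-1) * hroot
end

section
/- Over ℚ(t), if ζ0, ζ1, ζ2 are the roots of 4ζ^3 + (t^4 + 9t^2 + 17)ζ^2 + (4t^2 + 20)ζ + 4, then 4(ζ0−ζ1)(ζ0−ζ2)(ζ1−ζ2) = ± t(t^2 − t + 7)(t^2 + t + 7); equivalently, the discriminant of the monic polynomial ζ^3 + (1/4)(t^4 + 9t^2 + 17)ζ^2 + (t^2 + 5)ζ + 1 equals t^2(t^2 − t + 7)^2(t^2 + t + 7)^2/16. -/
/-- Discriminant identity for the cubic ζ³ + (1/4)(t⁴+9t²+17)ζ² + (t²+5)ζ + 1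
over ℚ(t): with roots ζ0, ζ1, ζ2 in a field extension one has
(4(ζ0−ζ1)(ζ0−ζ2)(ζ1−ζ2))² = (t(t²−t+7)(t²+t+7))², i.e. the discriminant of the
monic cubic equals t²(t²−t+7)²(t²+t+7)²/16. -/
theorem zeta_cubic_discriminant
    (L : Type*) [Field L] [Algebra (RatFunc ℚ) L]
    (t : L) (ht : t = algebraMap (RatFunc ℚ) L RatFunc.X)
    (ζ0 ζ1 ζ2 : L)
    (hroots : ∀ x : L,
      x ^ 3 + 1 / 4 * (t ^ 4 + 9 * t ^ 2 + 17) * x ^ 2 + (t ^ 2 + 5) * x + 1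
        = (x - ζ0) * (x - ζ1) * (x - ζ2)) :
    ((ζ0 - ζ1) * (ζ0 - ζ2) * (ζ1 - ζ2)) ^ 2
      = t ^ 2 * (t ^ 2 - t + 7) ^ 2 * (t ^ 2 + t + 7) ^ 2 / 16 := by
  haveI : CharZero (RatFunc ℚ) :=
    charZero_of_injective_algebraMap (algebraMap ℚ (RatFunc ℚ)).injective
  haveI : CharZero L :=
    charZero_of_injective_algebraMap (algebraMap (RatFunc ℚ) L).injective
  have hC : ζ0 * ζ1 * ζ2 = -1 := by linear_combination hroots 0
  have hA : ζ0 + ζ1 + ζ2 = -(1/4) * (t ^ 4 + 9 * t ^ 2 + 17) := by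
    linear_combination (hroots 1 + hroots (-1)) / 2 - hroots 0
  have hB : ζ0 * ζ1 + ζ0 * ζ2 + ζ1 * ζ2 = t ^ 2 + 5 := by
    linear_combination -hroots 1 + hroots (-1) / 3 + hroots 2 / 6 + hroots 0 / 2
  set e1 : L := ζ0 + ζ1 + ζ2 with he1
  set e2 : L := ζ0 * ζ1 + ζ0 * ζ2 + ζ1 * ζ2 with he2
  set e3 : L := ζ0 * ζ1 * ζ2 with he3
  linear_combination
    ((t ^ 2 + 5) ^ 2 * (e1 + (-(1/4) * (t ^ 4 + 9 * t ^ 2 + 17)))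
      + 4 * (e1 ^ 2 + e1 * (-(1/4) * (t ^ 4 + 9 * t ^ 2 + 17))
          + (-(1/4) * (t ^ 4 + 9 * t ^ 2 + 17)) ^ 2)
      - 18 * (t ^ 2 + 5)) * hA
    + (e1 ^ 2 * (e2 + (t ^ 2 + 5))
      - 4 * (e2 ^ 2 + e2 * (t ^ 2 + 5) + (t ^ 2 + 5) ^ 2)
      - 18 * e1) * hB
    + (-4 * e1 ^ 3 + 18 * e1 * e2 - 27 * (e3 - 1)) * hC
end
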